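/- For every natural number k ≥ 0, ∑_{i=0}^{2k} max(i, 2k − i)·binom(2k, i)·(1/2)^{2k} = k + k·binom(2k, k)·(1/2)^{2k}. -/

import Mathlib

open Finset

lemma tele (k : ℕ) :
    ∑ i ∈ range k, ((2*k : ℚ) - 2*i) * ((2*k).choose i : ℚ)
      = (k : ℚ) * ((2*k).choose k : ℚ) := by
  have h := Finset.sum_range_sub (fun i => (i : ℚ) * ((2*k).choose i : ℚ)) k
  simp only [Nat.cast_zero, zero_mul, sub_zero] at h
  rw [← h]
  apply Finset.sum_congr rfl
  intro i hi
  rw [Finset.mem_range] at hi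
  have h1 : (2*k).choose (i+1) * (i+1) = (2*k).choose i * (2*k - i) :=
    Nat.choose_succ_right_eq (2*k) i
  have h2 : i ≤ 2*k := by omega
  have h1' : ((2*k).choose (i+1) : ℚ) * (i+1) = ((2*k).choose i : ℚ) * ((2*k : ℚ) - i) := by
    have := congrArg (Nat.cast : ℕ → ℚ) h1
    push_cast [h2] at this
    linarith [this]
  push_cast
  nlinarith [h1']

lemma abs_sum (k : ℕ) :
    ∑ i ∈ range (2*k+1), |(i : ℚ) - k| * ((2*k).choose i : ℚ)
      = (k : ℚ) * ((2*k).choose k : ℚ) := by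
  set g : ℕ → ℚ := fun i => |(i : ℚ) - k| * ((2*k).choose i : ℚ) with hg
  have gsymm : ∀ j ≤ 2*k, g (2*k - j) = g j := by
    intro j hj
    simp only [hg]
    rw [Nat.choose_symm hj]
    congr 1
    rw [Nat.cast_sub hj]
    push_cast
    rw [abs_sub_comm]
    congr 1; ring
  have hsplit : ∑ i ∈ range (2*k+1), g i
      = (∑ i ∈ range k, g i) + ∑ i ∈ Ico k (2*k+1), g i := by
    rw [range_eq_Ico, ← Finset.sum_Ico_consecutive g (by omega : 0 ≤ k) (by omega : k ≤ 2*k+1),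
      ← range_eq_Ico]
  have hrefl : ∑ i ∈ Ico k (2*k+1), g i = ∑ i ∈ range (k+1), g i := by
    have h := Finset.sum_Ico_reflect g k (le_refl (2*k+1))
    have : ∑ j ∈ Ico k (2*k+1), g (2*k - j) = ∑ j ∈ Ico k (2*k+1), g j := by
      apply Finset.sum_congr rfl
      intro j hj
      rw [Finset.mem_Ico] at hj
      exact gsymm j (by omega)
    rw [this] at h
    have e1 : 2*k+1-(2*k+1) = 0 := by omega
    have e2 : 2*k+1-k = k+1 := by omega
    rw [e1, e2, ← range_eq_Ico] at h
    exact h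
  have hk0 : g k = 0 := by simp [hg]
  have : ∑ i ∈ range (2*k+1), g i = 2 * ∑ i ∈ range k, g i := by
    rw [hsplit, hrefl, Finset.sum_range_succ, hk0]
    ring
  rw [this, Finset.mul_sum, ← tele k]
  apply Finset.sum_congr rfl
  intro i hi
  rw [Finset.mem_range] at hi
  simp only [hg]
  rw [abs_of_nonpos (sub_nonpos.mpr (by exact_mod_cast hi.le))]
  ring

theorem expected_max_binomial_even (k : ℕ) :
    ∑ i ∈ Finset.range (2 * k + 1),
        ((max i (2 * k - i) : ℕ) : ℚ) * ((2 * k).choose i : ℚ) * (1/2) ^ (2 * k)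
      = (k : ℚ) + (k : ℚ) * ((2 * k).choose k : ℚ) * (1/2) ^ (2 * k) := by
  have key : ∑ i ∈ range (2*k+1), ((max i (2*k - i) : ℕ) : ℚ) * ((2*k).choose i : ℚ)
      = (k : ℚ) * 2^(2*k) + (k : ℚ) * ((2*k).choose k : ℚ) := by
    have step : ∀ i ∈ range (2*k+1),
        ((max i (2*k - i) : ℕ) : ℚ) * ((2*k).choose i : ℚ)
          = (k : ℚ) * ((2*k).choose i : ℚ) + |(i : ℚ) - k| * ((2*k).choose i : ℚ) := by
      intro i hi
      rw [Finset.mem_range] at hi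
      have hi' : i ≤ 2*k := by omega
      rcases le_total i k with h | h
      · have : max i (2*k - i) = 2*k - i := by omega
        rw [this, Nat.cast_sub hi', abs_of_nonpos (by
          have : (i:ℚ) ≤ k := by exact_mod_cast h
          linarith)]
        push_cast; ring
      · have : max i (2*k - i) = i := by omega
        rw [this, abs_of_nonneg (by
          have : (k:ℚ) ≤ i := by exact_mod_cast h
          linarith)]
        ring
    rw [Finset.sum_congr rfl step, Finset.sum_add_distrib, abs_sum k, ← Finset.mul_sum]
    congr 2
    have := Nat.sum_range_choose (2*k)
    exact_mod_cast congrArg (Nat.cast : ℕ → ℚ) this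
  calc ∑ i ∈ Finset.range (2 * k + 1),
        ((max i (2 * k - i) : ℕ) : ℚ) * ((2 * k).choose i : ℚ) * (1/2) ^ (2 * k)
      = (∑ i ∈ range (2*k+1), ((max i (2*k - i) : ℕ) : ℚ) * ((2*k).choose i : ℚ))
          * (1/2) ^ (2*k) := by rw [Finset.sum_mul]
    _ = ((k : ℚ) * 2^(2*k) + (k : ℚ) * ((2*k).choose k : ℚ)) * (1/2) ^ (2*k) := by rw [key]
    _ = (k : ℚ) + (k : ℚ) * ((2 * k).choose k : ℚ) * (1/2) ^ (2 * k) := by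
        have h2 : (2:ℚ)^(2*k) * (1/2:ℚ)^(2*k) = 1 := by
          rw [← mul_pow]; norm_num
        nlinarith [h2]
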